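/- Let m, n ≥ 3 be integers. The Type-I hyperedge-deleted Seidel matrix S_I(m,n) has exactly one negative eigenvalue, and its remaining m+n-1 eigenvalues (counted with multiplicity) are all positive. -/

import Mathlib

open Polynomial Matrix

/-- The Seidel matrix of the complete 3-uniform bipartite hypergraph `C³_{m,n}`. -/
noncomputable def seidelS (m n : ℕ) : Matrix (Fin m ⊕ Fin n) (Fin m ⊕ Fin n) ℝ :=
  fun i j =>
    if i = j then 0
    else
      match i, j with
      | Sum.inl _, Sum.inl _ => 1 - 2 * (n : ℝ)
      | Sum.inr _, Sum.inr _ => 1 - 2 * (m : ℝ)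
      | _, _ => 1 - 2 * ((m : ℝ) + (n : ℝ) - 2)

/-- Type-I hyperedge-deleted Seidel matrix. -/
noncomputable def seidelI (m n : ℕ) : Matrix (Fin m ⊕ Fin n) (Fin m ⊕ Fin n) ℝ :=
  fun i j =>
    match i, j with
    | Sum.inl a, Sum.inr b =>
        if a.val = 0 ∧ b.val ≤ 1 then 1 - 2 * ((m : ℝ) + (n : ℝ) - 3)
        else seidelS m n (Sum.inl a) (Sum.inr b)
    | Sum.inr b, Sum.inl a =>
        if a.val = 0 ∧ b.val ≤ 1 then 1 - 2 * ((m : ℝ) + (n : ℝ) - 3)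
        else seidelS m n (Sum.inr b) (Sum.inl a)
    | Sum.inr a, Sum.inr b =>
        if (a.val = 0 ∧ b.val = 1) ∨ (a.val = 1 ∧ b.val = 0) then 1 - 2 * ((m : ℝ) - 1)
        else seidelS m n (Sum.inr a) (Sum.inr b)
    | Sum.inl a, Sum.inl b => seidelS m n (Sum.inl a) (Sum.inl b)

/-- Type-II hyperedge-deleted Seidel matrix. -/
noncomputable def seidelII (m n : ℕ) : Matrix (Fin m ⊕ Fin n) (Fin m ⊕ Fin n) ℝ :=
  fun i j =>
    match i, j with
    | Sum.inl a, Sum.inl b =>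
        if (a.val = 0 ∧ b.val = 1) ∨ (a.val = 1 ∧ b.val = 0) then 1 - 2 * ((n : ℝ) - 1)
        else seidelS m n (Sum.inl a) (Sum.inl b)
    | Sum.inl a, Sum.inr b =>
        if a.val ≤ 1 ∧ b.val = 0 then 1 - 2 * ((m : ℝ) + (n : ℝ) - 3)
        else seidelS m n (Sum.inl a) (Sum.inr b)
    | Sum.inr b, Sum.inl a =>
        if a.val ≤ 1 ∧ b.val = 0 then 1 - 2 * ((m : ℝ) + (n : ℝ) - 3)
        else seidelS m n (Sum.inr b) (Sum.inl a)
    | Sum.inr a, Sum.inr b => seidelS m n (Sum.inr a) (Sum.inr b)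

/-- Seidel energy: sum of absolute values of the eigenvalues (roots of the
characteristic polynomial, with multiplicity). -/
noncomputable def seidelEnergy {k : Type*} [Fintype k] [DecidableEq k]
    (M : Matrix k k ℝ) : ℝ :=
  (M.charpoly.roots.map (fun x => |x|)).sum


section AuxLemmas

open Polynomial Matrix Finset

variable {k : Type*} [Fintype k] [DecidableEq k]

private lemma charpoly_diag' (d : k → ℝ) : (Matrix.diagonal d).charpoly = ∏ i, (X - C (d i)) := by
  have h : charmatrix (Matrix.diagonal d) = Matrix.diagonal (fun i => (X : ℝ[X]) - C (d i)) := by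
    ext i j
    rcases eq_or_ne i j with rfl | h
    · simp [charmatrix_apply_eq]
    · simp [charmatrix_apply_ne _ _ _ h, Matrix.diagonal_apply_ne _ h]
  rw [Matrix.charpoly, h, Matrix.det_diagonal]

private lemma charpoly_conj' (U D V : Matrix k k ℝ) (hUV : U * V = 1) (hVU : V * U = 1) :
    (U * D * V).charpoly = D.charpoly := by
  have hmap : ∀ (A B : Matrix k k ℝ), (A * B).map (C : ℝ →+* ℝ[X]) = A.map C * B.map C :=
    fun A B => Matrix.map_mul
  have h1 : (U.map (C : ℝ →+* ℝ[X])) * (V.map C) = 1 := by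
    rw [← hmap, hUV]; simp
  have key : charmatrix (U * D * V) = U.map C * charmatrix D * V.map C := by
    unfold charmatrix
    simp only [RingHom.mapMatrix_apply]
    rw [Matrix.mul_sub, Matrix.sub_mul, hmap, hmap]
    congr 1
    rw [← (Matrix.scalar_commute (X : ℝ[X]) (Commute.all X) (U.map C)).eq, mul_assoc, h1, mul_one]
  have h2 : (V.map (C : ℝ →+* ℝ[X])) * (U.map C) = 1 := by
    rw [← hmap, hVU]; simp
  rw [Matrix.charpoly, key, Matrix.det_mul, Matrix.det_mul, mul_comm, ← mul_assoc,
    ← Matrix.det_mul, h2, Matrix.det_one, one_mul, Matrix.charpoly]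

private lemma herm_charpoly (A : Matrix k k ℝ) (hA : A.IsHermitian) :
    A.charpoly = ∏ i, (X - C (hA.eigenvalues i)) := by
  have hU1 : (hA.eigenvectorUnitary : Matrix k k ℝ) * (star hA.eigenvectorUnitary : Matrix k k ℝ) = 1 := by
    simpa using (Unitary.mul_star_self_of_mem hA.eigenvectorUnitary.2)
  have hU2 : (star hA.eigenvectorUnitary : Matrix k k ℝ) * (hA.eigenvectorUnitary : Matrix k k ℝ) = 1 := by
    simpa using (Unitary.star_mul_self_of_mem hA.eigenvectorUnitary.2)
  conv_lhs => rw [hA.spectral_theorem, Unitary.conjStarAlgAut_apply]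
  rw [charpoly_conj' _ _ _ hU1 hU2]
  have h0 : (RCLike.ofReal ∘ hA.eigenvalues : k → ℝ) = hA.eigenvalues := by
    funext i; simp
  rw [h0, charpoly_diag']

private lemma herm_roots (A : Matrix k k ℝ) (hA : A.IsHermitian) :
    A.charpoly.roots = Finset.univ.val.map hA.eigenvalues := by
  rw [herm_charpoly A hA]
  rw [Finset.prod_eq_multiset_prod]
  have := Polynomial.roots_multiset_prod_X_sub_C (Finset.univ.val.map hA.eigenvalues)
  rw [Multiset.map_map] at this
  exact this

private lemma eig_form (A : Matrix k k ℝ) (hA : A.IsHermitian) (y : k → ℝ) :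
    ∑ i, hA.eigenvalues i * y i ^ 2
      = ((hA.eigenvectorUnitary : Matrix k k ℝ) *ᵥ y) ⬝ᵥ
        (A *ᵥ ((hA.eigenvectorUnitary : Matrix k k ℝ) *ᵥ y)) := by
  have hU2 : (star hA.eigenvectorUnitary : Matrix k k ℝ) * (hA.eigenvectorUnitary : Matrix k k ℝ) = 1 := by
    simpa using (Unitary.star_mul_self_of_mem hA.eigenvectorUnitary.2)
  have hstar : (star hA.eigenvectorUnitary : Matrix k k ℝ) = (hA.eigenvectorUnitary : Matrix k k ℝ)ᵀ := by
    ext i j; simp [Matrix.star_eq_conjTranspose, Matrix.conjTranspose_apply]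
  have hU1 : (hA.eigenvectorUnitary : Matrix k k ℝ) * (star hA.eigenvectorUnitary : Matrix k k ℝ) = 1 := by
    simpa using (Unitary.mul_star_self_of_mem hA.eigenvectorUnitary.2)
  have h0 : (RCLike.ofReal ∘ hA.eigenvalues : k → ℝ) = hA.eigenvalues := by funext i; simp
  have hmul : A * (hA.eigenvectorUnitary : Matrix k k ℝ)
      = (hA.eigenvectorUnitary : Matrix k k ℝ) * Matrix.diagonal hA.eigenvalues := by
    have h1 : (star hA.eigenvectorUnitary : Matrix k k ℝ) * A * (hA.eigenvectorUnitary : Matrix k k ℝ)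
        = Matrix.diagonal (RCLike.ofReal ∘ hA.eigenvalues) := by
      have := hA.conjStarAlgAut_star_eigenvectorUnitary
      rwa [Unitary.conjStarAlgAut_apply, Unitary.coe_star, star_star] at this
    rw [h0] at h1
    calc A * (hA.eigenvectorUnitary : Matrix k k ℝ)
        = (hA.eigenvectorUnitary : Matrix k k ℝ) *
          ((star hA.eigenvectorUnitary : Matrix k k ℝ) * A * (hA.eigenvectorUnitary : Matrix k k ℝ)) := by
          rw [← Matrix.mul_assoc, ← Matrix.mul_assoc, hU1, Matrix.one_mul]
      _ = _ := by rw [h1]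
  have hAx : A *ᵥ ((hA.eigenvectorUnitary : Matrix k k ℝ) *ᵥ y)
      = (hA.eigenvectorUnitary : Matrix k k ℝ) *ᵥ (Matrix.diagonal hA.eigenvalues *ᵥ y) := by
    rw [Matrix.mulVec_mulVec, Matrix.mulVec_mulVec, hmul]
  rw [hAx]
  have hdot : ((hA.eigenvectorUnitary : Matrix k k ℝ) *ᵥ y) ⬝ᵥ
        ((hA.eigenvectorUnitary : Matrix k k ℝ) *ᵥ (Matrix.diagonal hA.eigenvalues *ᵥ y))
      = y ⬝ᵥ (Matrix.diagonal hA.eigenvalues *ᵥ y) := by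
    rw [Matrix.dotProduct_mulVec, ← Matrix.vecMul_transpose, ← hstar,
      Matrix.vecMul_vecMul, hU2, Matrix.vecMul_one]
  rw [hdot]
  simp only [dotProduct, Matrix.mulVec_diagonal]
  exact Finset.sum_congr rfl fun i _ => by ring

private lemma count_signs (f c : k → ℝ)
    (H1 : ∀ y : k → ℝ, y ≠ 0 → ∑ i, c i * y i = 0 → 0 < ∑ i, f i * y i ^ 2)
    (H2 : ∃ y : k → ℝ, ∑ i, f i * y i ^ 2 < 0) :
    (Finset.univ.filter (fun i => f i < 0)).card = 1 ∧
    (Finset.univ.filter (fun i => 0 < f i)).card = Fintype.card k - 1 := by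
  have key : ∀ i j : k, i ≠ j → f i ≤ 0 → f j ≤ 0 → False := by
    intro i j hij hfi hfj
    by_cases hc : c i = 0 ∧ c j = 0
    · set y : k → ℝ := fun t => if t = i then 1 else 0 with hy
      have hy0 : y ≠ 0 := by
        intro h
        have := congrFun h i
        simp [hy] at this
      have hcy : ∑ t, c t * y t = 0 := by
        simp [hy, mul_ite, Finset.sum_ite_eq', hc.1]
      have := H1 y hy0 hcy
      have hsum : ∑ t, f t * y t ^ 2 = f i := by
        have h2 : ∀ t, f t * y t ^ 2 = if t = i then f t else 0 := by
          intro t; by_cases h : t = i <;> simp [hy, h]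
        simp [h2, Finset.sum_ite_eq']
      rw [hsum] at this; linarith
    · set y : k → ℝ := fun t => if t = i then c j else if t = j then -(c i) else 0 with hy
      have hy0 : y ≠ 0 := by
        intro h
        rcases not_and_or.1 hc with h1 | h1
        · have := congrFun h j
          simp [hy, hij.symm, h1] at this
        · have := congrFun h i
          simp [hy] at this
          exact h1 this
      have hterm : ∀ t, c t * y t = (if t = i then c i * c j else 0) + (if t = j then -(c j * c i) else 0) := by
        intro t
        rcases eq_or_ne t i with rfl | h1
        · simp [hy, hij, if_neg hij]
        · rcases eq_or_ne t j with rfl | h2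
          · simp [hy, h1, hij, mul_comm]
          · simp [hy, h1, h2]
      have hcy : ∑ t, c t * y t = 0 := by
        simp only [hterm, Finset.sum_add_distrib, Finset.sum_ite_eq', Finset.mem_univ, if_true]
        ring
      have hterm2 : ∀ t, f t * y t ^ 2 = (if t = i then f i * c j ^ 2 else 0) + (if t = j then f j * c i ^ 2 else 0) := by
        intro t
        rcases eq_or_ne t i with rfl | h1
        · simp [hy, hij, if_neg hij]
        · rcases eq_or_ne t j with rfl | h2
          · simp [hy, h1]
          · simp [hy, h1, h2]
      have := H1 y hy0 hcy
      rw [Finset.sum_congr rfl (fun t _ => hterm2 t), Finset.sum_add_distrib] at this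
      simp only [Finset.sum_ite_eq', Finset.mem_univ, if_true] at this
      nlinarith [sq_nonneg (c i), sq_nonneg (c j)]
  obtain ⟨y, hy⟩ := H2
  have hex : ∃ i0 : k, f i0 < 0 := by
    by_contra h
    push_neg at h
    have : 0 ≤ ∑ i, f i * y i ^ 2 :=
      Finset.sum_nonneg fun i _ => mul_nonneg (h i) (sq_nonneg _)
    linarith
  obtain ⟨i0, hi0⟩ := hex
  have hpos : ∀ j, j ≠ i0 → 0 < f j := by
    intro j hj
    by_contra h
    push_neg at h
    exact key i0 j (Ne.symm hj) (le_of_lt hi0) h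
  constructor
  · have h3 : Finset.univ.filter (fun i => f i < 0) = {i0} := by
      ext t
      simp only [Finset.mem_filter, Finset.mem_univ, true_and, Finset.mem_singleton]
      constructor
      · intro ht
        by_contra h
        exact absurd (hpos t h) (by linarith)
      · intro h; subst h; exact hi0
    rw [h3]; simp
  · have h3 : Finset.univ.filter (fun i => 0 < f i) = Finset.univ.erase i0 := by
      ext t
      simp only [Finset.mem_filter, Finset.mem_univ, true_and, Finset.mem_erase, and_true]
      constructor
      · intro ht h; subst h; linarith
      · intro h; exact hpos t h
    rw [h3, Finset.card_erase_of_mem (Finset.mem_univ _), Finset.card_univ]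

private lemma sum_offdiag (c : ℝ) (v : k → ℝ) :
    ∑ i, ∑ j, v i * ((if i = j then (0:ℝ) else c) * v j)
      = c * ((∑ i, v i) ^ 2 - ∑ i, v i ^ 2) := by
  have h : ∀ i j : k, v i * ((if i = j then (0:ℝ) else c) * v j)
      = c * (v i * v j) - (if j = i then c * (v i * v j) else 0) := by
    intro i j
    rcases eq_or_ne i j with rfl | h
    · simp
    · simp [h, Ne.symm h]; ring
  simp only [h, Finset.sum_sub_distrib, Finset.sum_ite_eq', Finset.mem_univ, if_true]
  have h2 : ∑ i : k, ∑ j : k, c * (v i * v j) = c * (∑ i, v i) ^ 2 := by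
    rw [sq, Finset.sum_mul_sum]
    rw [Finset.mul_sum]
    exact Finset.sum_congr rfl fun i _ => by rw [Finset.mul_sum]
  have h3 : ∑ i : k, c * (v i * v i) = c * ∑ i, v i ^ 2 := by
    rw [Finset.mul_sum]
    exact Finset.sum_congr rfl fun i _ => by ring
  rw [h2, h3, mul_sub]

private lemma sum_cross {l : Type*} [Fintype l] (c : ℝ) (v : k → ℝ) (w : l → ℝ) :
    ∑ i, ∑ j, v i * (c * w j) = c * ((∑ i, v i) * (∑ j, w j)) := by
  rw [Finset.sum_mul_sum, Finset.mul_sum]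
  exact Finset.sum_congr rfl fun i _ => by
    rw [Finset.mul_sum]
    exact Finset.sum_congr rfl fun j _ => by ring

private lemma sum_pair_aux {l : Type*} [Fintype l] [DecidableEq l]
    (i0 : k) (j0 : l) (e : ℝ) (v : k → ℝ) (w : l → ℝ) :
    ∑ i, ∑ j, v i * (((if i = i0 then (1:ℝ) else 0) * (if j = j0 then e else 0)) * w j)
      = e * (v i0 * w j0) := by
  have h : ∀ (i : k) (j : l), v i * (((if i = i0 then (1:ℝ) else 0) * (if j = j0 then e else 0)) * w j)
      = if i = i0 then (if j = j0 then e * (v i * w j) else 0) else 0 := by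
    intro i j; split_ifs <;> ring
  simp only [h, Finset.sum_ite_eq', Finset.mem_univ, if_true, Finset.sum_ite_irrel,
    Finset.sum_const_zero]

private lemma sum_pair_aux' {l : Type*} [Fintype l] [DecidableEq l]
    (i0 : k) (j0 : l) (e : ℝ) (v : k → ℝ) (w : l → ℝ) :
    ∑ i, ∑ j, v i * (((if i = i0 then e else 0) * (if j = j0 then (1:ℝ) else 0)) * w j)
      = e * (v i0 * w j0) := by
  have h : ∀ (i : k) (j : l), v i * (((if i = i0 then e else 0) * (if j = j0 then (1:ℝ) else 0)) * w j)
      = if i = i0 then (if j = j0 then e * (v i * w j) else 0) else 0 := by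
    intro i j; split_ifs <;> ring
  simp only [h, Finset.sum_ite_eq', Finset.mem_univ, if_true, Finset.sum_ite_irrel,
    Finset.sum_const_zero]

end AuxLemmas

section SeidelAux

open Polynomial Matrix Finset

variable {m n : ℕ}

private lemma eI_ll (a b : Fin m) :
    seidelI m n (Sum.inl a) (Sum.inl b) = if a = b then 0 else 1 - 2 * (n : ℝ) := by
  show seidelS m n (Sum.inl a) (Sum.inl b) = _
  unfold seidelS
  rcases eq_or_ne a b with rfl | h
  · simp
  · simp [h]

private lemma eI_rr (z0 z1 : Fin n) (hz0 : z0.val = 0) (hz1 : z1.val = 1) (a b : Fin n) :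
    seidelI m n (Sum.inr a) (Sum.inr b)
      = (if a = b then 0 else 1 - 2 * (m : ℝ))
        + ((if a = z0 then (1:ℝ) else 0) * (if b = z1 then (2:ℝ) else 0)
          + (if a = z1 then (1:ℝ) else 0) * (if b = z0 then (2:ℝ) else 0)) := by
  show (if (a.val = 0 ∧ b.val = 1) ∨ (a.val = 1 ∧ b.val = 0) then 1 - 2 * ((m : ℝ) - 1)
        else seidelS m n (Sum.inr a) (Sum.inr b)) = _
  unfold seidelS
  have hab : a = b ↔ a.val = b.val := Fin.ext_iff
  have haz0 : a = z0 ↔ a.val = 0 := by rw [Fin.ext_iff, hz0]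
  have haz1 : a = z1 ↔ a.val = 1 := by rw [Fin.ext_iff, hz1]
  have hbz0 : b = z0 ↔ b.val = 0 := by rw [Fin.ext_iff, hz0]
  have hbz1 : b = z1 ↔ b.val = 1 := by rw [Fin.ext_iff, hz1]
  have hab2 : Sum.inr (α := Fin m) a = Sum.inr b ↔ a.val = b.val := by
    rw [Sum.inr.injEq]; exact hab
  simp only [hab2, hab, haz0, haz1, hbz0, hbz1]
  split_ifs <;> first | ring1 | (exfalso; omega)

private lemma eI_lr (w0 : Fin m) (hw0 : w0.val = 0) (z0 z1 : Fin n) (hz0 : z0.val = 0) (hz1 : z1.val = 1)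
    (a : Fin m) (b : Fin n) :
    seidelI m n (Sum.inl a) (Sum.inr b)
      = (1 - 2 * ((m : ℝ) + (n : ℝ) - 2))
        + ((if a = w0 then (1:ℝ) else 0) * (if b = z0 then (2:ℝ) else 0)
          + (if a = w0 then (1:ℝ) else 0) * (if b = z1 then (2:ℝ) else 0)) := by
  show (if a.val = 0 ∧ b.val ≤ 1 then 1 - 2 * ((m : ℝ) + (n : ℝ) - 3)
        else seidelS m n (Sum.inl a) (Sum.inr b)) = _
  unfold seidelS
  have haw0 : a = w0 ↔ a.val = 0 := by rw [Fin.ext_iff, hw0]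
  have hbz0 : b = z0 ↔ b.val = 0 := by rw [Fin.ext_iff, hz0]
  have hbz1 : b = z1 ↔ b.val = 1 := by rw [Fin.ext_iff, hz1]
  have hne : (Sum.inl a : Fin m ⊕ Fin n) = Sum.inr b ↔ False := by simp
  simp only [haw0, hbz0, hbz1, hne, if_false]
  split_ifs <;> first | ring1 | (exfalso; omega)

private lemma eI_rl (w0 : Fin m) (hw0 : w0.val = 0) (z0 z1 : Fin n) (hz0 : z0.val = 0) (hz1 : z1.val = 1)
    (b : Fin n) (a : Fin m) :
    seidelI m n (Sum.inr b) (Sum.inl a)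
      = (1 - 2 * ((m : ℝ) + (n : ℝ) - 2))
        + (((if b = z0 then (2:ℝ) else 0) + (if b = z1 then (2:ℝ) else 0))
            * (if a = w0 then (1:ℝ) else 0)) := by
  show (if a.val = 0 ∧ b.val ≤ 1 then 1 - 2 * ((m : ℝ) + (n : ℝ) - 3)
        else seidelS m n (Sum.inr b) (Sum.inl a)) = _
  unfold seidelS
  have haw0 : a = w0 ↔ a.val = 0 := by rw [Fin.ext_iff, hw0]
  have hbz0 : b = z0 ↔ b.val = 0 := by rw [Fin.ext_iff, hz0]
  have hbz1 : b = z1 ↔ b.val = 1 := by rw [Fin.ext_iff, hz1]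
  have hne : (Sum.inr b : Fin m ⊕ Fin n) = Sum.inl a ↔ False := by simp
  simp only [haw0, hbz0, hbz1, hne, if_false]
  split_ifs <;> first | ring1 | (exfalso; omega)

private lemma quad_ident (m n : ℕ) (w0 : Fin m) (hw0 : w0.val = 0)
    (z0 z1 : Fin n) (hz0 : z0.val = 0) (hz1 : z1.val = 1) (x : Fin m ⊕ Fin n → ℝ) :
    x ⬝ᵥ (seidelI m n *ᵥ x)
      = (1 - 2*(n:ℝ)) * (∑ i, x (Sum.inl i))^2 + (2*(n:ℝ) - 1) * (∑ i, x (Sum.inl i)^2)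
        + (1 - 2*(m:ℝ)) * (∑ j, x (Sum.inr j))^2 + (2*(m:ℝ) - 1) * (∑ j, x (Sum.inr j)^2)
        + 2*(5 - 2*(m:ℝ) - 2*(n:ℝ)) * ((∑ i, x (Sum.inl i)) * (∑ j, x (Sum.inr j)))
        + 4 * (x (Sum.inl w0) * (x (Sum.inr z0) + x (Sum.inr z1)))
        + 4 * (x (Sum.inr z0) * x (Sum.inr z1)) := by
  have hdot : x ⬝ᵥ (seidelI m n *ᵥ x) = ∑ i, ∑ j, x i * (seidelI m n i j * x j) := by
    simp only [dotProduct, Matrix.mulVec, Finset.mul_sum]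
  rw [hdot]
  rw [Fintype.sum_sum_type]
  simp only [Fintype.sum_sum_type]
  simp only [eI_ll, eI_rr z0 z1 hz0 hz1, eI_lr w0 hw0 z0 z1 hz0 hz1,
    eI_rl w0 hw0 z0 z1 hz0 hz1]
  simp only [add_mul, mul_add, Finset.sum_add_distrib]
  rw [sum_offdiag, sum_offdiag, sum_cross, sum_cross, sum_pair_aux, sum_pair_aux,
    sum_pair_aux, sum_pair_aux, sum_pair_aux', sum_pair_aux']
  ring

end SeidelAux

section SeidelMain

open Polynomial Matrix Finset

private lemma seidelS_symm (m n : ℕ) (i j : Fin m ⊕ Fin n) :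
    seidelS m n j i = seidelS m n i j := by
  unfold seidelS
  rcases eq_or_ne i j with rfl | h
  · simp
  · rw [if_neg (Ne.symm h), if_neg h]
    cases i <;> cases j <;> rfl

private lemma seidelI_herm (m n : ℕ) : (seidelI m n).IsHermitian := by
  rw [Matrix.IsHermitian]
  ext i j
  rw [Matrix.conjTranspose_apply, star_trivial]
  cases i with
  | inl a =>
    cases j with
    | inl b => exact seidelS_symm m n _ _
    | inr b =>
      show (if a.val = 0 ∧ b.val ≤ 1 then _ else seidelS m n (Sum.inr b) (Sum.inl a))
        = (if a.val = 0 ∧ b.val ≤ 1 then _ else seidelS m n (Sum.inl a) (Sum.inr b))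
      split_ifs with h
      · rfl
      · exact seidelS_symm m n _ _
  | inr a =>
    cases j with
    | inl b =>
      show (if b.val = 0 ∧ a.val ≤ 1 then _ else seidelS m n (Sum.inl b) (Sum.inr a))
        = (if b.val = 0 ∧ a.val ≤ 1 then _ else seidelS m n (Sum.inr a) (Sum.inl b))
      split_ifs with h
      · rfl
      · exact seidelS_symm m n _ _
    | inr b =>
      show (if (b.val = 0 ∧ a.val = 1) ∨ (b.val = 1 ∧ a.val = 0) then _
            else seidelS m n (Sum.inr b) (Sum.inr a))
        = (if (a.val = 0 ∧ b.val = 1) ∨ (a.val = 1 ∧ b.val = 0) then _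
            else seidelS m n (Sum.inr a) (Sum.inr b))
      have hc : ((b.val = 0 ∧ a.val = 1) ∨ (b.val = 1 ∧ a.val = 0))
          ↔ ((a.val = 0 ∧ b.val = 1) ∨ (a.val = 1 ∧ b.val = 0)) := by tauto
      simp only [hc]
      split_ifs with h
      · rfl
      · exact seidelS_symm m n _ _

private lemma quad_pos (m n : ℕ) (hm : 3 ≤ m) (hn : 3 ≤ n) (x : Fin m ⊕ Fin n → ℝ)
    (hx : x ≠ 0) (hsum : ∑ i, x i = 0) : 0 < x ⬝ᵥ (seidelI m n *ᵥ x) := by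
  have hm' : (3:ℝ) ≤ (m:ℝ) := by exact_mod_cast hm
  have hn' : (3:ℝ) ≤ (n:ℝ) := by exact_mod_cast hn
  set w0 : Fin m := ⟨0, by omega⟩ with hw0def
  set z0 : Fin n := ⟨0, by omega⟩ with hz0def
  set z1 : Fin n := ⟨1, by omega⟩ with hz1def
  rw [quad_ident m n w0 rfl z0 z1 rfl rfl x]
  set P := ∑ i, x (Sum.inl i) with hP
  set Q := ∑ j, x (Sum.inr j) with hQdef
  set Sp := ∑ i, x (Sum.inl i)^2 with hSp
  set Sq := ∑ j, x (Sum.inr j)^2 with hSq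
  set t := x (Sum.inl w0) with ht
  set q0 := x (Sum.inr z0) with hq0
  set q1 := x (Sum.inr z1) with hq1
  have hPQ : P + Q = 0 := by
    rw [Fintype.sum_sum_type] at hsum
    rw [hP, hQdef]; exact hsum
  have hQ : Q = -P := by linarith
  have hSp0 : 0 ≤ Sp := Finset.sum_nonneg fun i _ => sq_nonneg _
  have hSq0 : 0 ≤ Sq := Finset.sum_nonneg fun i _ => sq_nonneg _
  have hSpt : t^2 ≤ Sp :=
    Finset.single_le_sum (f := fun i => x (Sum.inl i)^2) (fun i _ => sq_nonneg _)
      (Finset.mem_univ w0)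
  have hz01 : z0 ≠ z1 := by
    intro h
    have := congrArg Fin.val h
    simp [hz0def, hz1def] at this
  have hSqq : q0^2 + q1^2 ≤ Sq := by
    have hsub : ({z0, z1} : Finset (Fin n)) ⊆ Finset.univ := Finset.subset_univ _
    have := Finset.sum_le_sum_of_subset_of_nonneg hsub
      (fun i _ _ => sq_nonneg (x (Sum.inr i)))
    rwa [Finset.sum_pair hz01] at this
  have hSpos : 0 < Sp + Sq := by
    obtain ⟨i, hi⟩ := Function.ne_iff.1 hx
    have hxz : x i ≠ 0 := hi
    have : 0 < ∑ j, x j ^ 2 := by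
      apply Finset.sum_pos' (fun j _ => sq_nonneg _)
      exact ⟨i, Finset.mem_univ i, by positivity⟩
    rw [Fintype.sum_sum_type] at this
    rw [hSp, hSq]; exact this
  rw [hQ]
  have c1 : 0 ≤ (2*(m:ℝ) + 2*(n:ℝ) - 8) * P^2 :=
    mul_nonneg (by linarith) (sq_nonneg P)
  have c2 : 0 ≤ (2*(n:ℝ) - 6) * Sp := mul_nonneg (by linarith) hSp0
  have c3 : 0 ≤ (2*(m:ℝ) - 6) * Sq := mul_nonneg (by linarith) hSq0
  have c4 : 0 ≤ Sp - t^2 := by linarith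
  have c5 : 0 ≤ Sq - q0^2 - q1^2 := by linarith
  have c6 : 0 ≤ (t + q0 + q1)^2 := sq_nonneg _
  nlinarith [c1, c2, c3, c4, c5, c6, hSpos, sq_nonneg t, sq_nonneg q0, sq_nonneg q1]

private lemma ones_neg (m n : ℕ) (hm : 3 ≤ m) (hn : 3 ≤ n) :
    (fun _ => (1:ℝ)) ⬝ᵥ (seidelI m n *ᵥ fun _ => (1:ℝ)) < 0 := by
  have hm' : (3:ℝ) ≤ (m:ℝ) := by exact_mod_cast hm
  have hn' : (3:ℝ) ≤ (n:ℝ) := by exact_mod_cast hn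
  rw [quad_ident m n ⟨0, by omega⟩ rfl ⟨0, by omega⟩ ⟨1, by omega⟩ rfl rfl]
  simp only [one_pow, Finset.sum_const, Finset.card_univ, Fintype.card_fin, nsmul_eq_mul,
    mul_one]
  nlinarith [mul_nonneg (by linarith : (0:ℝ) ≤ (m:ℝ) - 3) (by linarith : (0:ℝ) ≤ (n:ℝ) - 3),
    mul_pos (by linarith : (0:ℝ) < (m:ℝ)) (by linarith : (0:ℝ) < (n:ℝ)),
    sq_nonneg ((m:ℝ) - (n:ℝ)), sq_nonneg ((m:ℝ) + (n:ℝ)),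
    mul_nonneg (mul_nonneg (by linarith : (0:ℝ) ≤ (m:ℝ)) (by linarith : (0:ℝ) ≤ (n:ℝ))) (by linarith : (0:ℝ) ≤ (m:ℝ) + (n:ℝ) - 6)]

end SeidelMain

theorem stmt8 (m n : ℕ) (hm : 3 ≤ m) (hn : 3 ≤ n) :
    ((seidelI m n).charpoly.roots.filter (fun x => x < 0)).card = 1 ∧
    ((seidelI m n).charpoly.roots.filter (fun x => 0 < x)).card = m + n - 1 := by
  classical
  have hA : (seidelI m n).IsHermitian := seidelI_herm m n
  have hU1 : (hA.eigenvectorUnitary : Matrix (Fin m ⊕ Fin n) (Fin m ⊕ Fin n) ℝ)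
      * (star hA.eigenvectorUnitary : Matrix (Fin m ⊕ Fin n) (Fin m ⊕ Fin n) ℝ) = 1 := by
    simpa using (Unitary.mul_star_self_of_mem hA.eigenvectorUnitary.2)
  have hU2 : (star hA.eigenvectorUnitary : Matrix (Fin m ⊕ Fin n) (Fin m ⊕ Fin n) ℝ)
      * (hA.eigenvectorUnitary : Matrix (Fin m ⊕ Fin n) (Fin m ⊕ Fin n) ℝ) = 1 := by
    simpa using (Unitary.star_mul_self_of_mem hA.eigenvectorUnitary.2)
  set U : Matrix (Fin m ⊕ Fin n) (Fin m ⊕ Fin n) ℝ :=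
    (hA.eigenvectorUnitary : Matrix (Fin m ⊕ Fin n) (Fin m ⊕ Fin n) ℝ) with hUdef
  set c : (Fin m ⊕ Fin n) → ℝ := fun i => ∑ j, U j i with hc
  have H1 : ∀ y : (Fin m ⊕ Fin n) → ℝ, y ≠ 0 → ∑ i, c i * y i = 0 →
      0 < ∑ i, hA.eigenvalues i * y i ^ 2 := by
    intro y hy hcy
    rw [eig_form _ hA y]
    apply quad_pos m n hm hn (U *ᵥ y)
    · intro h0
      apply hy
      have : y = (star hA.eigenvectorUnitary : Matrix (Fin m ⊕ Fin n) (Fin m ⊕ Fin n) ℝ)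
          *ᵥ (U *ᵥ y) := by
        rw [Matrix.mulVec_mulVec, hU2, Matrix.one_mulVec]
      rw [this, h0, Matrix.mulVec_zero]
    · have hswap : ∑ i, (U *ᵥ y) i = ∑ j, c j * y j := by
        simp only [Matrix.mulVec, dotProduct]
        rw [Finset.sum_comm]
        exact Finset.sum_congr rfl fun j _ => by rw [← Finset.sum_mul, hc]
      rw [hswap, hcy]
  have H2 : ∃ y : (Fin m ⊕ Fin n) → ℝ, ∑ i, hA.eigenvalues i * y i ^ 2 < 0 := by
    refine ⟨(star hA.eigenvectorUnitary : Matrix (Fin m ⊕ Fin n) (Fin m ⊕ Fin n) ℝ)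
      *ᵥ (fun _ => 1), ?_⟩
    rw [eig_form _ hA]
    have hone : U *ᵥ ((star hA.eigenvectorUnitary : Matrix (Fin m ⊕ Fin n) (Fin m ⊕ Fin n) ℝ)
        *ᵥ (fun _ => (1:ℝ))) = fun _ => (1:ℝ) := by
      rw [Matrix.mulVec_mulVec, hU1, Matrix.one_mulVec]
    rw [hone]
    exact ones_neg m n hm hn
  obtain ⟨h1c, h2c⟩ := count_signs hA.eigenvalues c H1 H2
  rw [herm_roots _ hA]
  constructor
  · rw [Multiset.filter_map, Multiset.card_map]
    exact h1c
  · rw [Multiset.filter_map, Multiset.card_map]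
    have h2c' : (Finset.filter (fun i => 0 < hA.eigenvalues i) Finset.univ).card = m + n - 1 := by
      rw [h2c]; simp [Fintype.card_sum]
    exact h2c'
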